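/- Let C be an abelian category and 𝒲 a class of objects of C closed under isomorphisms and finite direct sums. Define G¹(𝒲) = G(𝒲) and inductively G^{n+1}(𝒲) = G(Gⁿ(𝒲)) for n ≥ 1 (this makes sense since G(𝒲) is again a class of objects closed under isomorphisms and finite direct sums). Then Gⁿ(𝒲) = G(𝒲) for every n ≥ 1; in particular G(G(𝒲)) = G(𝒲), i.e., an object of C admits a complete G(𝒲)-resolution if and only if it admits a complete 𝒲-resolution. -/

import Mathlib

open CategoryTheory Category Limits

universe v u

variable {C : Type u} [Category.{v} C] [Abelian C]

def SES {A B X : C} (f : A ⟶ B) (g : B ⟶ X) : Prop :=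
  ∃ w : f ≫ g = 0, (CategoryTheory.ShortComplex.mk f g w).ShortExact

def CovExact (𝒲 : Set C) {A B X : C} (f : A ⟶ B) (g : B ⟶ X) : Prop :=
  ∀ W ∈ 𝒲,
    (Function.Injective fun u : W ⟶ A => u ≫ f) ∧
    (∀ v : W ⟶ B, v ≫ g = 0 → ∃ u : W ⟶ A, u ≫ f = v) ∧
    (Function.Surjective fun v : W ⟶ B => v ≫ g)

def ContraExact (𝒲 : Set C) {A B X : C} (f : A ⟶ B) (g : B ⟶ X) : Prop :=
  ∀ W ∈ 𝒲,
    (Function.Injective fun u : X ⟶ W => g ≫ u) ∧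
    (∀ v : B ⟶ W, f ≫ v = 0 → ∃ u : X ⟶ W, g ≫ u = v) ∧
    (Function.Surjective fun v : B ⟶ W => f ≫ v)

/-- A proper `𝒲`-resolution of `A` with terms `W i`: short exact sequences
`0 ⟶ K (i+1) ⟶ W i ⟶ K i ⟶ 0` with `K 0 = A`, each `W i ∈ 𝒲`, each `Hom(𝒲,-)`-exact. -/
structure ProperResolution (𝒲 : Set C) (A : C) (W : ℕ → C) where
  K : ℕ → C
  hK : K 0 = A
  g : ∀ i, K (i + 1) ⟶ W i
  f : ∀ i, W i ⟶ K i
  mem : ∀ i, W i ∈ 𝒲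
  ses : ∀ i, SES (g i) (f i)
  proper : ∀ i, CovExact 𝒲 (g i) (f i)

/-- The proper resolution is in addition `Hom(-,𝒲)`-exact. -/
def ProperResolution.IsContraExact {𝒲 : Set C} {A : C} {W : ℕ → C}
    (R : ProperResolution 𝒲 A W) : Prop :=
  ∀ i, ContraExact 𝒲 (R.g i) (R.f i)

/-- A coproper `𝒲`-coresolution of `A` with terms `W i`: short exact sequences
`0 ⟶ K i ⟶ W i ⟶ K (i+1) ⟶ 0` with `K 0 = A`, each `W i ∈ 𝒲`, each `Hom(-,𝒲)`-exact. -/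
structure CoproperCoresolution (𝒲 : Set C) (A : C) (W : ℕ → C) where
  K : ℕ → C
  hK : K 0 = A
  g : ∀ i, K i ⟶ W i
  f : ∀ i, W i ⟶ K (i + 1)
  mem : ∀ i, W i ∈ 𝒲
  ses : ∀ i, SES (g i) (f i)
  coproper : ∀ i, ContraExact 𝒲 (g i) (f i)

/-- The coproper coresolution is in addition `Hom(𝒲,-)`-exact. -/
def CoproperCoresolution.IsCovExact {𝒲 : Set C} {A : C} {W : ℕ → C}
    (R : CoproperCoresolution 𝒲 A W) : Prop :=
  ∀ i, CovExact 𝒲 (R.g i) (R.f i)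

/-- Membership in the Gorenstein category `G(𝒲)`: `X` admits both a proper `𝒲`-resolution
which is `Hom(-,𝒲)`-exact and a coproper `𝒲`-coresolution which is `Hom(𝒲,-)`-exact
(i.e. a complete `𝒲`-resolution). -/
def MemGW (𝒲 : Set C) (X : C) : Prop :=
  (∃ (W : ℕ → C) (R : ProperResolution 𝒲 X W), R.IsContraExact) ∧
  (∃ (W : ℕ → C) (R : CoproperCoresolution 𝒲 X W), R.IsCovExact)


/-- The Gorenstein category `G(𝒲)` as a class of objects. -/
def GW (𝒲 : Set C) : Set C := {X | MemGW 𝒲 X}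

/-! ## Auxiliary machinery for the proof -/

namespace Stab13

open ZeroObject

section Basic

variable {𝒲 𝒱 E T : Set C}

lemma _root_.SES.w {A B X : C} {f : A ⟶ B} {g : B ⟶ X} (h : SES f g) : f ≫ g = 0 := h.choose

lemma _root_.SES.shortExact {A B X : C} {f : A ⟶ B} {g : B ⟶ X} (h : SES f g) :
    (CategoryTheory.ShortComplex.mk f g h.w).ShortExact := h.choose_spec

lemma _root_.SES.mono {A B X : C} {f : A ⟶ B} {g : B ⟶ X} (h : SES f g) : Mono f :=
  h.shortExact.mono_f

lemma _root_.SES.epi {A B X : C} {f : A ⟶ B} {g : B ⟶ X} (h : SES f g) : Epi g :=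
  h.shortExact.epi_g

lemma _root_.SES.exact {A B X : C} {f : A ⟶ B} {g : B ⟶ X} (h : SES f g) :
    (CategoryTheory.ShortComplex.mk f g h.w).Exact := h.shortExact.exact

/-- The kernel property of a short exact sequence. -/
lemma _root_.SES.lift {A B X : C} {f : A ⟶ B} {g : B ⟶ X} (h : SES f g) {T' : C}
    (v : T' ⟶ B) (hv : v ≫ g = 0) : ∃ u : T' ⟶ A, u ≫ f = v := by
  have := h.mono
  exact h.exact.lift' v hv

/-- The cokernel property of a short exact sequence. -/
lemma _root_.SES.desc {A B X : C} {f : A ⟶ B} {g : B ⟶ X} (h : SES f g) {T' : C}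
    (v : B ⟶ T') (hv : f ≫ v = 0) : ∃ u : X ⟶ T', g ≫ u = v := by
  have := h.epi
  exact h.exact.desc' v hv

/-- A short exact sequence together with both `Hom(E,-)` and `Hom(-,E)` exactness. -/
structure BE (E : Set C) {A B X : C} (f : A ⟶ B) (g : B ⟶ X) : Prop where
  ses : SES f g
  cov : CovExact E f g
  contra : ContraExact E f g

lemma BE.mk' {A B X : C} {f : A ⟶ B} {g : B ⟶ X} (h : SES f g)
    (hlift : ∀ W ∈ E, ∀ v : W ⟶ X, ∃ u : W ⟶ B, u ≫ g = v)
    (hext : ∀ W ∈ E, ∀ φ : A ⟶ W, ∃ ψ : B ⟶ W, f ≫ ψ = φ) : BE E f g := by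
  refine ⟨h, fun W hW => ?_, fun W hW => ?_⟩
  · have := h.mono
    exact ⟨fun u u' huu => by simpa using (cancel_mono f).1 huu,
      fun v hv => h.lift v hv, fun v => hlift W hW v⟩
  · have := h.epi
    exact ⟨fun u u' huu => by simpa using (cancel_epi g).1 huu,
      fun v hv => h.desc v hv, fun φ => hext W hW φ⟩

lemma BE.liftW {A B X : C} {f : A ⟶ B} {g : B ⟶ X} (h : BE E f g) {W : C}
    (hW : W ∈ E) (v : W ⟶ X) : ∃ u : W ⟶ B, u ≫ g = v :=
  (h.cov W hW).2.2 v

lemma BE.extW {A B X : C} {f : A ⟶ B} {g : B ⟶ X} (h : BE E f g) {W : C}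
    (hW : W ∈ E) (φ : A ⟶ W) : ∃ ψ : B ⟶ W, f ≫ ψ = φ :=
  (h.contra W hW).2.2 φ

lemma BE.mono_cls {A B X : C} {f : A ⟶ B} {g : B ⟶ X} (h : BE E f g)
    (hsub : 𝒲 ⊆ E) : BE 𝒲 f g :=
  ⟨h.ses, fun W hW => h.cov W (hsub hW), fun W hW => h.contra W (hsub hW)⟩

/-- Any epimorphism together with its kernel forms a short exact sequence. -/
lemma ses_kernel {B X : C} (g : B ⟶ X) [Epi g] : SES (kernel.ι g) g := by
  refine ⟨kernel.condition g, ShortComplex.ShortExact.mk' ?_ ?_ ?_⟩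
  · exact ShortComplex.exact_of_f_is_kernel _ (kernelIsKernel g)
  · exact inferInstanceAs (Mono (kernel.ι g))
  · exact inferInstanceAs (Epi g)

lemma ses_of_splitting {A B X : C} {f : A ⟶ B} {g : B ⟶ X} (w : f ≫ g = 0)
    (s : (ShortComplex.mk f g w).Splitting) : SES f g :=
  ⟨w, s.shortExact⟩

/-- `0 ⟶ 0 ⟶ X ⟶ X ⟶ 0` is biexact for every class. -/
lemma be_zero_id (E : Set C) (X : C) : BE E (0 : (0 : C) ⟶ X) (𝟙 X) := by
  refine BE.mk' (ses_of_splitting (by simp)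
    (ShortComplex.Splitting.ofIsZeroOfIsIso _ (isZero_zero C) (by dsimp; infer_instance)))
    (fun W _ v => ⟨v, Category.comp_id v⟩)
    (fun W _ φ => ⟨0, (isZero_zero C).eq_of_src _ _⟩)

/-- `0 ⟶ X ⟶ X ⟶ 0 ⟶ 0` is biexact for every class. -/
lemma be_id_zero (E : Set C) (X : C) : BE E (𝟙 X) (0 : X ⟶ (0 : C)) := by
  refine BE.mk' (ses_of_splitting (by simp)
    (ShortComplex.Splitting.ofIsIsoOfIsZero _ (by dsimp; infer_instance) (isZero_zero C)))
    (fun W _ v => ⟨0, (isZero_zero C).eq_of_tgt _ _⟩)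
    (fun W _ φ => ⟨φ, Category.id_comp φ⟩)

/-- `0 ⟶ U ⟶ U ⊞ V ⟶ V ⟶ 0` (split) is biexact for every class. -/
lemma be_inl_snd (E : Set C) (U V : C) :
    BE E (biprod.inl : U ⟶ U ⊞ V) (biprod.snd : U ⊞ V ⟶ V) := by
  refine BE.mk' (ses_of_splitting (by simp)
    (ShortComplex.Splitting.ofHasBinaryBiproduct U V))
    (fun W _ v => ⟨v ≫ biprod.inr, by simp⟩)
    (fun W _ φ => ⟨biprod.fst ≫ φ, by simp⟩)

end Basic

section Gen

open CategoryTheory.Abelian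

attribute [local instance] Pseudoelement.objectToSort Pseudoelement.homToFun

variable {𝒲 : Set C}

lemma pe_id {P : C} (a : Pseudoelement P) : (𝟙 P : P ⟶ P) a = a :=
  Quotient.inductionOn a fun a' => Quotient.sound
    ⟨a'.1, 𝟙 a'.1, 𝟙 a'.1, (inferInstance : Epi (𝟙 a'.1)), inferInstance, by simp [app]⟩

lemma pe_comp {P Q R : C} (f : P ⟶ Q) (g : Q ⟶ R) (a : P) : g (f a) = (f ≫ g) a :=
  (Pseudoelement.comp_apply f g a).symm

lemma pe_exact {A B X : C} {f : A ⟶ B} {g : B ⟶ X} (h : SES f g) (b : B)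
    (hb : g b = 0) : ∃ a : A, f a = b :=
  Pseudoelement.pseudo_exact_of_exact h.exact b hb

lemma pe_comp_zero {P Q R : C} (f : P ⟶ Q) (g : Q ⟶ R) (hw : f ≫ g = 0) (a : P) :
    g (f a) = 0 := by
  rw [pe_comp, hw, Pseudoelement.zero_apply]

/-- Kernel of a composite of the epi parts of two short exact sequences.
From `0 → X → Y → Z → 0` (maps `x, y`) and `0 → W → V → Y → 0` (maps `w, v`), the
kernel `M` of `v ≫ y : V → Z` yields biexact sequences `0 → M → V → Z → 0` and
`0 → W → M → X → 0`. -/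
lemma gen3 {X Y Z W V : C} {x : X ⟶ Y} {y : Y ⟶ Z} {w : W ⟶ V} {v : V ⟶ Y}
    (h1 : BE 𝒲 x y) (h2 : BE 𝒲 w v) :
    ∃ (M : C) (m : M ⟶ V) (t : W ⟶ M) (r : M ⟶ X),
      t ≫ m = w ∧ r ≫ x = m ≫ v ∧ BE 𝒲 m (v ≫ y) ∧ BE 𝒲 t r := by
  have hmx : Mono x := h1.ses.mono
  have hepiy : Epi y := h1.ses.epi
  have hepiv : Epi v := h2.ses.epi
  have hmw : Mono w := h2.ses.mono
  haveI : Epi (v ≫ y) := epi_comp v y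
  set M := kernel (v ≫ y) with hM
  set m : M ⟶ V := kernel.ι (v ≫ y) with hm
  have hme : SES m (v ≫ y) := ses_kernel (v ≫ y)
  have hwvy : w ≫ v ≫ y = 0 := by rw [← Category.assoc, h2.ses.w, zero_comp]
  set t : W ⟶ M := kernel.lift (v ≫ y) w hwvy with htdef
  have ht : t ≫ m = w := kernel.lift_ι _ _ _
  have hmvy : (m ≫ v) ≫ y = 0 := by rw [Category.assoc]; exact kernel.condition _
  obtain ⟨r, hr⟩ := h1.ses.lift (m ≫ v) hmvy
  -- `SES t r`
  have hw0 : t ≫ r = 0 := by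
    rw [← cancel_mono x, Category.assoc, hr, zero_comp, ← Category.assoc, ht, h2.ses.w]
  have hmt : Mono t := by
    have : Mono (t ≫ m) := ht ▸ hmw
    exact mono_of_mono t m
  have hepir : Epi r := by
    apply Pseudoelement.epi_of_pseudo_surjective
    intro z
    obtain ⟨u', hu'⟩ := Pseudoelement.pseudo_surjective_of_epi v (x z)
    have hyu : (v ≫ y) u' = 0 := by
      rw [Pseudoelement.comp_apply, hu', pe_comp_zero x y h1.ses.w]
    obtain ⟨mm, hmm⟩ := pe_exact hme u' hyu
    refine ⟨mm, Pseudoelement.pseudo_injective_of_mono x ?_⟩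
    calc x (r mm) = (r ≫ x) mm := pe_comp r x mm
      _ = (m ≫ v) mm := by rw [hr]
      _ = v (m mm) := Pseudoelement.comp_apply m v mm
      _ = v u' := by rw [hmm]
      _ = x z := hu'
  have hex : (ShortComplex.mk t r hw0).Exact := by
    apply Pseudoelement.exact_of_pseudo_exact
    intro mm hmm
    have hvm : v (m mm) = 0 := by
      calc v (m mm) = (m ≫ v) mm := pe_comp m v mm
        _ = (r ≫ x) mm := by rw [hr]
        _ = x (r mm) := Pseudoelement.comp_apply r x mm
        _ = 0 := by rw [hmm, Pseudoelement.apply_zero]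
    obtain ⟨ww, hww⟩ := pe_exact h2.ses (m mm) hvm
    refine ⟨ww, Pseudoelement.pseudo_injective_of_mono m ?_⟩
    calc m (t ww) = (t ≫ m) ww := pe_comp t m ww
      _ = w ww := by rw [ht]
      _ = m mm := hww
  have hstr : SES t r := ⟨hw0, ShortComplex.ShortExact.mk' hex hmt hepir⟩
  -- biexactness of `0 → M → V → Z → 0`
  have hbe1 : BE 𝒲 m (v ≫ y) := by
    refine BE.mk' hme (fun W' hW' v' => ?_) (fun W' hW' φ => ?_)
    · obtain ⟨s, hs⟩ := h1.liftW hW' v'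
      obtain ⟨s', hs'⟩ := h2.liftW hW' s
      exact ⟨s', by rw [← Category.assoc, hs', hs]⟩
    · obtain ⟨ψ, hψ⟩ := h2.extW hW' (t ≫ φ)
      have hδ : t ≫ (φ - m ≫ ψ) = 0 := by
        rw [Preadditive.comp_sub, ← Category.assoc, ht, hψ, sub_self]
      obtain ⟨ε, hε⟩ := hstr.desc _ hδ
      obtain ⟨ζ, hζ⟩ := h1.extW hW' ε
      refine ⟨ψ + v ≫ ζ, ?_⟩
      rw [Preadditive.comp_add, ← Category.assoc, ← hr, Category.assoc, hζ, hε]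
      abel
  -- biexactness of `0 → W → M → X → 0`
  have hbe2 : BE 𝒲 t r := by
    refine BE.mk' hstr (fun W' hW' v' => ?_) (fun W' hW' φ => ?_)
    · obtain ⟨s, hs⟩ := h2.liftW hW' (v' ≫ x)
      have hs0 : s ≫ v ≫ y = 0 := by
        rw [← Category.assoc, hs, Category.assoc, h1.ses.w, comp_zero]
      refine ⟨kernel.lift (v ≫ y) s hs0, ?_⟩
      rw [← cancel_mono x, Category.assoc, hr, ← Category.assoc]
      rw [show kernel.lift (v ≫ y) s hs0 ≫ m = s from kernel.lift_ι _ _ _, hs]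
    · obtain ⟨ψ, hψ⟩ := h2.extW hW' φ
      exact ⟨m ≫ ψ, by rw [← Category.assoc, ht, hψ]⟩
  exact ⟨M, m, t, r, ht, hr, hbe1, hbe2⟩

/-- The horseshoe step: given a biexact sequence `0 → A → B → Cc → 0` and biexact
sequences `0 → A1 → VA → A → 0`, `0 → C1 → U → Cc → 0` with `U ∈ 𝒲`, we get a biexact
sequence `0 → N → VA ⊞ U → B → 0` whose kernel `N` is a biexact extension
`0 → A1 → N → C1 → 0`. -/
lemma gen4 {A B Cc A1 VA C1 U : C} {a : A ⟶ B} {b : B ⟶ Cc}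
    {gA : A1 ⟶ VA} {vA : VA ⟶ A} {gC : C1 ⟶ U} {uC : U ⟶ Cc}
    (hab : BE 𝒲 a b) (hA : BE 𝒲 gA vA) (hC : BE 𝒲 gC uC) (hU : U ∈ 𝒲) :
    ∃ (N : C) (ι : N ⟶ VA ⊞ U) (π : VA ⊞ U ⟶ B) (α : A1 ⟶ N) (β : N ⟶ C1),
      BE 𝒲 ι π ∧ BE 𝒲 α β := by
  have hma : Mono a := hab.ses.mono
  have hepib : Epi b := hab.ses.epi
  have hmgA : Mono gA := hA.ses.mono
  have hepivA : Epi vA := hA.ses.epi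
  have hmgC : Mono gC := hC.ses.mono
  have hepiuC : Epi uC := hC.ses.epi
  obtain ⟨ℓ, hℓ⟩ := hab.liftW hU uC
  set π : VA ⊞ U ⟶ B := biprod.desc (vA ≫ a) ℓ with hπdef
  have hinlπ : biprod.inl ≫ π = vA ≫ a := biprod.inl_desc _ _
  have hinrπ : biprod.inr ≫ π = ℓ := biprod.inr_desc _ _
  have hπb : π ≫ b = biprod.snd ≫ uC := by
    apply biprod.hom_ext' <;> simp [hπdef, hℓ, hab.ses.w]
  haveI hepiπ : Epi π := by
    refine (Preadditive.epi_iff_cancel_zero _).2 (fun Z z hz => ?_)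
    have h1 : vA ≫ a ≫ z = 0 := by
      rw [← Category.assoc, ← hinlπ, Category.assoc, hz, comp_zero]
    have haz : a ≫ z = 0 := by
      rw [← cancel_epi vA, h1, comp_zero]
    obtain ⟨y', hy'⟩ := hab.ses.desc z haz
    have hlz : ℓ ≫ z = 0 := by rw [← hinrπ, Category.assoc, hz, comp_zero]
    have huy : uC ≫ y' = 0 := by rw [← hℓ, Category.assoc, hy', hlz]
    have : y' = 0 := by rw [← cancel_epi uC, huy, comp_zero]
    rw [← hy', this, comp_zero]
  set N := kernel π with hN
  set ι : N ⟶ VA ⊞ U := kernel.ι π with hι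
  have hsesιπ : SES ι π := ses_kernel π
  have hα0 : (gA ≫ biprod.inl) ≫ π = 0 := by
    rw [Category.assoc, hinlπ, ← Category.assoc, hA.ses.w, zero_comp]
  set α : A1 ⟶ N := kernel.lift π (gA ≫ biprod.inl) hα0 with hαdef
  have hαι : α ≫ ι = gA ≫ biprod.inl := kernel.lift_ι _ _ _
  have hsnd0 : (ι ≫ biprod.snd) ≫ uC = 0 := by
    rw [Category.assoc, ← hπb, ← Category.assoc, kernel.condition, zero_comp]
  obtain ⟨β, hβ⟩ := hC.ses.lift (ι ≫ biprod.snd) hsnd0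
  -- `SES α β`
  have hw0 : α ≫ β = 0 := by
    rw [← cancel_mono gC, Category.assoc, hβ, ← Category.assoc, hαι, zero_comp,
      Category.assoc, biprod.inl_snd, comp_zero]
  have hmα : Mono α := by
    have : Mono (α ≫ ι) := by rw [hαι]; exact mono_comp _ _
    exact mono_of_mono α ι
  have hepiβ : Epi β := by
    apply Pseudoelement.epi_of_pseudo_surjective
    intro c1
    have hπs : b (π ((biprod.inr : U ⟶ VA ⊞ U) (gC c1))) = 0 := by
      have e1 : π ((biprod.inr : U ⟶ VA ⊞ U) (gC c1)) = ℓ (gC c1) := by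
        rw [pe_comp (biprod.inr : U ⟶ VA ⊞ U) π, hinrπ]
      rw [e1, pe_comp ℓ b, hℓ]
      exact pe_comp_zero gC uC hC.ses.w c1
    obtain ⟨aa, haa⟩ := pe_exact hab.ses _ hπs
    obtain ⟨va, hva⟩ := Pseudoelement.pseudo_surjective_of_epi vA aa
    have heq : π ((biprod.inl : VA ⟶ VA ⊞ U) va) =
        π ((biprod.inr : U ⟶ VA ⊞ U) (gC c1)) := by
      calc π ((biprod.inl : VA ⟶ VA ⊞ U) va) = ((biprod.inl : VA ⟶ VA ⊞ U) ≫ π) va :=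
            pe_comp _ π va
        _ = (vA ≫ a) va := by rw [hinlπ]
        _ = a (vA va) := Pseudoelement.comp_apply vA a va
        _ = a aa := by rw [hva]
        _ = _ := haa
    obtain ⟨z, hz0, hzg⟩ := Pseudoelement.sub_of_eq_image π _ _ heq.symm
    obtain ⟨n, hn⟩ := pe_exact hsesιπ z hz0
    have hsndinl : (biprod.snd : VA ⊞ U ⟶ U) ((biprod.inl : VA ⟶ VA ⊞ U) va) = 0 := by
      rw [pe_comp, biprod.inl_snd, Pseudoelement.zero_apply]
    have hsnd : (biprod.snd : VA ⊞ U ⟶ U) z =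
        (biprod.snd : VA ⊞ U ⟶ U) ((biprod.inr : U ⟶ VA ⊞ U) (gC c1)) :=
      hzg _ biprod.snd hsndinl
    refine ⟨n, Pseudoelement.pseudo_injective_of_mono gC ?_⟩
    calc gC (β n) = (β ≫ gC) n := pe_comp β gC n
      _ = (ι ≫ biprod.snd) n := by rw [hβ]
      _ = (biprod.snd : VA ⊞ U ⟶ U) (ι n) := Pseudoelement.comp_apply ι _ n
      _ = (biprod.snd : VA ⊞ U ⟶ U) z := by rw [hn]
      _ = (biprod.snd : VA ⊞ U ⟶ U) ((biprod.inr : U ⟶ VA ⊞ U) (gC c1)) := hsnd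
      _ = ((biprod.inr : U ⟶ VA ⊞ U) ≫ (biprod.snd : VA ⊞ U ⟶ U)) (gC c1) :=
            pe_comp _ _ _
      _ = gC c1 := by rw [biprod.inr_snd, pe_id]
  have hex : (ShortComplex.mk α β hw0).Exact := by
    apply Pseudoelement.exact_of_pseudo_exact
    intro n hn
    have h1 : (biprod.snd : VA ⊞ U ⟶ U) (ι n) = 0 := by
      calc (biprod.snd : VA ⊞ U ⟶ U) (ι n) = (ι ≫ biprod.snd) n :=
            pe_comp ι _ n
        _ = (β ≫ gC) n := by rw [hβ]
        _ = gC (β n) := Pseudoelement.comp_apply β gC n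
        _ = 0 := by rw [hn, Pseudoelement.apply_zero]
    obtain ⟨va, hva⟩ := pe_exact (be_inl_snd 𝒲 VA U).ses (ι n) h1
    have h2 : a (vA va) = 0 := by
      calc a (vA va) = (vA ≫ a) va := pe_comp vA a va
        _ = ((biprod.inl : VA ⟶ VA ⊞ U) ≫ π) va := by rw [hinlπ]
        _ = π ((biprod.inl : VA ⟶ VA ⊞ U) va) := Pseudoelement.comp_apply _ π va
        _ = π (ι n) := by rw [hva]
        _ = (ι ≫ π) n := pe_comp ι π n
        _ = 0 := by rw [kernel.condition, Pseudoelement.zero_apply]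
    have hva0 : vA va = 0 :=
      Pseudoelement.zero_of_map_zero a (Pseudoelement.pseudo_injective_of_mono a) _ h2
    obtain ⟨p1, hp1⟩ := pe_exact hA.ses va hva0
    refine ⟨p1, Pseudoelement.pseudo_injective_of_mono ι ?_⟩
    calc ι (α p1) = (α ≫ ι) p1 := pe_comp α ι p1
      _ = (gA ≫ biprod.inl) p1 := by rw [hαι]
      _ = (biprod.inl : VA ⟶ VA ⊞ U) (gA p1) := Pseudoelement.comp_apply gA _ p1
      _ = (biprod.inl : VA ⟶ VA ⊞ U) va := by rw [hp1]
      _ = ι n := hva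
  have hsesαβ : SES α β := ⟨hw0, ShortComplex.ShortExact.mk' hex hmα hepiβ⟩
  -- biexactness of `0 → N → VA ⊞ U → B → 0`
  have hbe1 : BE 𝒲 ι π := by
    refine BE.mk' hsesιπ (fun V' hV' v' => ?_) (fun V' hV' φ => ?_)
    · obtain ⟨s, hs⟩ := hC.liftW hV' (v' ≫ b)
      have h0 : (v' - s ≫ ℓ) ≫ b = 0 := by
        rw [Preadditive.sub_comp, Category.assoc, hℓ, hs, sub_self]
      obtain ⟨h', hh'⟩ := hab.ses.lift _ h0
      obtain ⟨h'', hh''⟩ := hA.liftW hV' h'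
      refine ⟨h'' ≫ biprod.inl + s ≫ biprod.inr, ?_⟩
      rw [Preadditive.add_comp, Category.assoc, Category.assoc, hinlπ, hinrπ,
        ← Category.assoc, hh'', hh']
      abel
    · obtain ⟨ψ1, hψ1⟩ := hA.extW hV' (α ≫ φ)
      have hδ : α ≫ (φ - ι ≫ biprod.fst ≫ ψ1) = 0 := by
        rw [Preadditive.comp_sub, ← Category.assoc, hαι, Category.assoc,
          ← Category.assoc (biprod.inl), biprod.inl_fst, Category.id_comp, hψ1, sub_self]
      obtain ⟨ε, hε⟩ := hsesαβ.desc _ hδ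
      obtain ⟨ζ, hζ⟩ := hC.extW hV' ε
      refine ⟨biprod.fst ≫ ψ1 + biprod.snd ≫ ζ, ?_⟩
      rw [Preadditive.comp_add, ← Category.assoc ι biprod.snd, ← hβ, Category.assoc,
        hζ, hε]
      abel
  -- biexactness of `0 → A1 → N → C1 → 0`
  have hbe2 : BE 𝒲 α β := by
    refine BE.mk' hsesαβ (fun V' hV' v' => ?_) (fun V' hV' φ => ?_)
    · have h1 : (v' ≫ gC ≫ ℓ) ≫ b = 0 := by
        rw [Category.assoc, Category.assoc, hℓ, hC.ses.w, comp_zero]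
      obtain ⟨h', hh'⟩ := hab.ses.lift _ h1
      obtain ⟨h'', hh''⟩ := hA.liftW hV' h'
      have hw' : (v' ≫ gC ≫ biprod.inr - h'' ≫ biprod.inl) ≫ π = 0 := by
        rw [Preadditive.sub_comp]
        simp only [Category.assoc]
        rw [hinrπ, hinlπ, ← Category.assoc h'', hh'', hh', sub_self]
      refine ⟨kernel.lift π _ hw', ?_⟩
      have hki : kernel.lift π _ hw' ≫ ι = v' ≫ gC ≫ biprod.inr - h'' ≫ biprod.inl :=
        kernel.lift_ι _ _ _
      rw [← cancel_mono gC, Category.assoc, hβ, ← Category.assoc, hki]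
      simp [Preadditive.sub_comp]
    · obtain ⟨ψ, hψ⟩ := hA.extW hV' φ
      refine ⟨ι ≫ biprod.fst ≫ ψ, ?_⟩
      rw [← Category.assoc, hαι, Category.assoc, ← Category.assoc (biprod.inl),
        biprod.inl_fst, Category.id_comp, hψ]
  exact ⟨N, ι, π, α, β, hbe1, hbe2⟩

end Gen

section Towers

variable {𝒲 𝒱 T E : Set C}

/-- A tower of biexact short exact sequences `0 → K (i+1) → W i → K i → 0` with terms in
`T` and exactness with respect to `E`. -/
structure Tower (T E : Set C) where
  W : ℕ → C
  K : ℕ → C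
  g : ∀ i, K (i + 1) ⟶ W i
  f : ∀ i, W i ⟶ K i
  mem : ∀ i, W i ∈ T
  be : ∀ i, BE E (g i) (f i)

/-- `A` admits a proper resolution with terms in `T`, biexact with respect to `E`. -/
def HasRes (T E : Set C) (A : C) : Prop :=
  ∃ R : Tower T E, R.K 0 = A

/-- The tail of a tower, resolving the first syzygy. -/
def Tower.tail (R : Tower T E) : Tower T E where
  W i := R.W (i + 1)
  K i := R.K (i + 1)
  g i := R.g (i + 1)
  f i := R.f (i + 1)
  mem i := R.mem (i + 1)
  be i := R.be (i + 1)

lemma Tower.hasRes_tail (R : Tower T E) : HasRes T E (R.K 1) := ⟨R.tail, rfl⟩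

/-- Prepend one biexact sequence to a tower. -/
def Tower.cons (R : Tower T E) {W0 A : C} (g0 : R.K 0 ⟶ W0) (f0 : W0 ⟶ A)
    (hm : W0 ∈ T) (hbe : BE E g0 f0) : Tower T E where
  W n := Nat.casesOn n W0 (fun i => R.W i)
  K n := Nat.casesOn n A (fun i => R.K i)
  g n := Nat.casesOn n g0 (fun i => R.g i)
  f n := Nat.casesOn n f0 (fun i => R.f i)
  mem n := Nat.casesOn n hm (fun i => R.mem i)
  be n := Nat.casesOn n hbe (fun i => R.be i)

lemma Tower.cons_K0 (R : Tower T E) {W0 A : C} (g0 : R.K 0 ⟶ W0) (f0 : W0 ⟶ A)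
    (hm : W0 ∈ T) (hbe : BE E g0 f0) : (R.cons g0 f0 hm hbe).K 0 = A := rfl

/-- Generic corecursion principle: a chain of biexact sequences produces a tower. -/
lemma hasRes_of_chain {S : Type*} (next : S → S) (obj : S → C) (Wf : S → C)
    (gf : ∀ s, obj (next s) ⟶ Wf s) (ff : ∀ s, Wf s ⟶ obj s)
    (hm : ∀ s, Wf s ∈ T) (hbe : ∀ s, BE E (gf s) (ff s)) (s0 : S) :
    HasRes T E (obj s0) := by
  let chain : ℕ → S := fun n => Nat.rec s0 (fun _ s => next s) n
  exact ⟨{ W := fun n => Wf (chain n)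
           K := fun n => obj (chain n)
           g := fun n => gf (chain n)
           f := fun n => ff (chain n)
           mem := fun n => hm (chain n)
           be := fun n => hbe (chain n) }, rfl⟩

/-- The zero object has a complete resolution `⋯ → W₀ → W₀ → W₀ → W₀ → 0` (alternating
identities and zeros). -/
lemma hasRes_zero {W0 : C} (hm : W0 ∈ T) (E : Set C) : HasRes T E (0 : C) := by
  have := hasRes_of_chain (S := Bool) (fun b => !b)
    (fun b => Bool.rec W0 (0 : C) b) (fun _ => W0)
    (fun b => Bool.rec (0 : (0 : C) ⟶ W0) (𝟙 W0) b)
    (fun b => Bool.rec (𝟙 W0) (0 : W0 ⟶ (0 : C)) b)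
    (fun _ => hm)
    (fun b => Bool.rec (be_zero_id E W0) (be_id_zero E W0) b) true
  exact this

lemma HasRes.cons {B W0 A : C} (h : HasRes T E B) (g0 : B ⟶ W0) (f0 : W0 ⟶ A)
    (hm : W0 ∈ T) (hbe : BE E g0 f0) : HasRes T E A := by
  obtain ⟨R, rfl⟩ := h
  exact ⟨R.cons g0 f0 hm hbe, rfl⟩

end Towers

section HS

variable {𝒲 𝒱 : Set C}

lemma BE.comp_eqToHom {A B X X' : C} {f : A ⟶ B} {g : B ⟶ X} (hbe : BE E f g)
    (h : X = X') : BE E f (g ≫ eqToHom h) := by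
  subst h; simpa using hbe

/-- State for the horseshoe corecursion. -/
structure ExtSt (𝒲 : Set C) where
  A : C
  B : C
  Cc : C
  a : A ⟶ B
  b : B ⟶ Cc
  hab : BE 𝒲 a b
  RA : Tower 𝒲 𝒲
  hRA : RA.K 0 = A
  RC : Tower 𝒲 𝒲
  hRC : RC.K 0 = Cc

lemma extStep (hsum : ∀ U V : C, U ∈ 𝒲 → V ∈ 𝒲 → (U ⊞ V) ∈ 𝒲) (s : ExtSt 𝒲) :
    ∃ (s' : ExtSt 𝒲) (W' : C) (g : s'.B ⟶ W') (f : W' ⟶ s.B), W' ∈ 𝒲 ∧ BE 𝒲 g f := by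
  obtain ⟨A, B, Cc, a, b, hab, RA, hRA, RC, hRC⟩ := s
  subst hRA hRC
  obtain ⟨N, ι, π, α, β, hbe1, hbe2⟩ := gen4 hab (RA.be 0) (RC.be 0) (RC.mem 0)
  exact ⟨⟨RA.K 1, N, RC.K 1, α, β, hbe2, RA.tail, rfl, RC.tail, rfl⟩,
    RA.W 0 ⊞ RC.W 0, ι, π, hsum _ _ (RA.mem 0) (RC.mem 0), hbe1⟩

/-- Horseshoe lemma: objects admitting complete `𝒲`-resolutions are closed under
biexact extensions. -/
lemma hasRes_extension (hsum : ∀ U V : C, U ∈ 𝒲 → V ∈ 𝒲 → (U ⊞ V) ∈ 𝒲)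
    {A B Cc : C} {a : A ⟶ B} {b : B ⟶ Cc} (hab : BE 𝒲 a b)
    (hA : HasRes 𝒲 𝒲 A) (hC : HasRes 𝒲 𝒲 Cc) : HasRes 𝒲 𝒲 B := by
  obtain ⟨RA, hRA⟩ := hA
  obtain ⟨RC, hRC⟩ := hC
  choose nxt W' g f h using extStep hsum
  exact hasRes_of_chain nxt ExtSt.B W' g f (fun s => (h s).1) (fun s => (h s).2)
    ⟨A, B, Cc, a, b, hab, RA, hRA, RC, hRC⟩

/-- State for the main corecursion. -/
structure MSt (𝒲 𝒱 : Set C) where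
  H : C
  L : C
  K : C
  a : H ⟶ L
  b : L ⟶ K
  hab : BE 𝒲 a b
  RH : Tower 𝒲 𝒲
  hRH : RH.K 0 = H
  RK : Tower 𝒱 𝒲
  hRK : RK.K 0 = K

lemma mainStep (hsum : ∀ U V : C, U ∈ 𝒲 → V ∈ 𝒲 → (U ⊞ V) ∈ 𝒲)
    (hres : ∀ G ∈ 𝒱, HasRes 𝒲 𝒲 G) (s : MSt 𝒲 𝒱) :
    ∃ (s' : MSt 𝒲 𝒱) (W' : C) (g : s'.L ⟶ W') (f : W' ⟶ s.L), W' ∈ 𝒲 ∧ BE 𝒲 g f := by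
  obtain ⟨H, L, K, a, b, hab, RH, hRH, RK, hRK⟩ := s
  subst hRH hRK
  obtain ⟨RG, hRG⟩ := hres (RK.W 0) (RK.mem 0)
  -- replace the first term of the `𝒱`-resolution by a `𝒲`-term
  obtain ⟨M, m, t', r', ht', hr', hbeM, hbeT⟩ :=
    gen3 (RK.be 0) ((RG.be 0).comp_eqToHom hRG)
  -- horseshoe step
  obtain ⟨N, ι, π, α, β, hbeιπ, hbeαβ⟩ := gen4 hab (RH.be 0) hbeM (RG.mem 0)
  -- the new kernel is an extension of syzygies
  obtain ⟨M2, m2, t2, r2, ht2, hr2, hbeM2, hbeT2⟩ := gen3 hbeT hbeαβ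
  have hM2 : HasRes 𝒲 𝒲 M2 :=
    hasRes_extension hsum hbeT2 RH.hasRes_tail RG.hasRes_tail
  obtain ⟨RH', hRH'⟩ := hM2
  exact ⟨⟨M2, N, RK.K 1, m2, β ≫ r', hbeM2, RH', hRH', RK.tail, rfl⟩,
    RH.W 0 ⊞ RG.W 0, ι, π, hsum _ _ (RH.mem 0) (RG.mem 0), hbeιπ⟩

/-- Main lemma (resolution side): if `X` admits a resolution with terms in `𝒱` that is
`𝒲`-biexact, and every object of `𝒱` admits a complete `𝒲`-resolution, then so does
`X`. -/
lemma main_res (hsum : ∀ U V : C, U ∈ 𝒲 → V ∈ 𝒲 → (U ⊞ V) ∈ 𝒲)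
    (hres : ∀ G ∈ 𝒱, HasRes 𝒲 𝒲 G) {X : C} (hX : HasRes 𝒱 𝒲 X) :
    HasRes 𝒲 𝒲 X := by
  obtain ⟨RX, hRX⟩ := hX
  subst hRX
  obtain ⟨RG0, hRG0⟩ := hres (RX.W 0) (RX.mem 0)
  obtain ⟨R0, hR0⟩ := hasRes_zero (T := 𝒲) (RG0.mem 0) 𝒲
  choose nxt W' g f h using mainStep hsum hres
  exact hasRes_of_chain nxt MSt.L W' g f (fun s => (h s).1) (fun s => (h s).2)
    ⟨(0 : C), RX.K 0, RX.K 0, 0, 𝟙 _, be_zero_id 𝒲 _, R0, hR0, RX, rfl⟩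

end HS

section Op

variable {𝒲 𝒱 T E : Set C}

lemma ses_op {A B X : C} {f : A ⟶ B} {g : B ⟶ X} (h : SES f g) : SES g.op f.op := by
  obtain ⟨w, hw⟩ := h
  have w' : g.op ≫ f.op = 0 := by rw [← op_comp, w]; simp
  exact ⟨w', hw.op⟩

lemma ses_unop {A B X : Cᵒᵖ} {f : A ⟶ B} {g : B ⟶ X} (h : SES f g) :
    SES g.unop f.unop := by
  obtain ⟨w, hw⟩ := h
  have w' : g.unop ≫ f.unop = 0 := by rw [← unop_comp, w]; simp
  exact ⟨w', hw.unop⟩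

lemma be_op {A B X : C} {f : A ⟶ B} {g : B ⟶ X} (h : BE E f g) :
    BE (Opposite.op '' E) g.op f.op := by
  refine ⟨ses_op h.ses, ?_, ?_⟩
  · rintro V ⟨W, hW, rfl⟩
    obtain ⟨hinj, hmid, hsurj⟩ := h.contra W hW
    refine ⟨?_, ?_, ?_⟩
    · intro u u' huu
      apply Quiver.Hom.unop_inj
      apply hinj
      have := congrArg Quiver.Hom.unop huu
      simpa using this
    · intro v hv
      obtain ⟨u, hu⟩ := hmid v.unop (by
        have := congrArg Quiver.Hom.unop hv
        simpa using this)
      exact ⟨u.op, Quiver.Hom.unop_inj (by simpa using hu)⟩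
    · intro v
      obtain ⟨u, hu⟩ := hsurj v.unop
      exact ⟨u.op, Quiver.Hom.unop_inj (by simpa using hu)⟩
  · rintro V ⟨W, hW, rfl⟩
    obtain ⟨hinj, hmid, hsurj⟩ := h.cov W hW
    refine ⟨?_, ?_, ?_⟩
    · intro u u' huu
      apply Quiver.Hom.unop_inj
      apply hinj
      have := congrArg Quiver.Hom.unop huu
      simpa using this
    · intro v hv
      obtain ⟨u, hu⟩ := hmid v.unop (by
        have := congrArg Quiver.Hom.unop hv
        simpa using this)
      exact ⟨u.op, Quiver.Hom.unop_inj (by simpa using hu)⟩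
    · intro v
      obtain ⟨u, hu⟩ := hsurj v.unop
      exact ⟨u.op, Quiver.Hom.unop_inj (by simpa using hu)⟩

lemma be_unop {A B X : Cᵒᵖ} {f : A ⟶ B} {g : B ⟶ X}
    (h : BE (Opposite.op '' E) f g) : BE E g.unop f.unop := by
  refine ⟨ses_unop h.ses, ?_, ?_⟩
  · intro W hW
    obtain ⟨hinj, hmid, hsurj⟩ := h.contra (Opposite.op W) ⟨W, hW, rfl⟩
    refine ⟨?_, ?_, ?_⟩
    · intro u u' huu
      apply Quiver.Hom.op_inj
      apply hinj
      have := congrArg Quiver.Hom.op huu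
      simpa using this
    · intro v hv
      obtain ⟨u, hu⟩ := hmid v.op (by
        have := congrArg Quiver.Hom.op hv
        simpa using this)
      exact ⟨u.unop, Quiver.Hom.op_inj (by simpa using hu)⟩
    · intro v
      obtain ⟨u, hu⟩ := hsurj v.op
      exact ⟨u.unop, Quiver.Hom.op_inj (by simpa using hu)⟩
  · intro W hW
    obtain ⟨hinj, hmid, hsurj⟩ := h.cov (Opposite.op W) ⟨W, hW, rfl⟩
    refine ⟨?_, ?_, ?_⟩
    · intro u u' huu
      apply Quiver.Hom.op_inj
      apply hinj
      have := congrArg Quiver.Hom.op huu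
      simpa using this
    · intro v hv
      obtain ⟨u, hu⟩ := hmid v.op (by
        have := congrArg Quiver.Hom.op hv
        simpa using this)
      exact ⟨u.unop, Quiver.Hom.op_inj (by simpa using hu)⟩
    · intro v
      obtain ⟨u, hu⟩ := hsurj v.op
      exact ⟨u.unop, Quiver.Hom.op_inj (by simpa using hu)⟩

/-- A tower of biexact short exact sequences `0 → K i → W i → K (i+1) → 0` (coresolution
version). -/
structure CoTower (T E : Set C) where
  W : ℕ → C
  K : ℕ → C
  g : ∀ i, K i ⟶ W i
  f : ∀ i, W i ⟶ K (i + 1)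
  mem : ∀ i, W i ∈ T
  be : ∀ i, BE E (g i) (f i)

def HasCores (T E : Set C) (A : C) : Prop :=
  ∃ R : CoTower T E, R.K 0 = A

lemma hasCores_iff_op {A : C} :
    HasCores T E A ↔ HasRes (Opposite.op '' T) (Opposite.op '' E) (Opposite.op A) := by
  constructor
  · rintro ⟨R, hR⟩
    exact ⟨{ W := fun i => Opposite.op (R.W i)
             K := fun i => Opposite.op (R.K i)
             g := fun i => (R.f i).op
             f := fun i => (R.g i).op
             mem := fun i => ⟨R.W i, R.mem i, rfl⟩
             be := fun i => be_op (R.be i) }, congrArg Opposite.op hR⟩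
  · rintro ⟨S, hS⟩
    refine ⟨{ W := fun i => (S.W i).unop
              K := fun i => (S.K i).unop
              g := fun i => (S.f i).unop
              f := fun i => (S.g i).unop
              mem := fun i => ?_
              be := fun i => be_unop (S.be i) }, congrArg Opposite.unop hS⟩
    obtain ⟨w, hw, hww⟩ := S.mem i
    show (S.W i).unop ∈ T
    rw [← hww]
    exact hw

/-- `op (U ⊞ V) ≅ op U ⊞ op V`. -/
noncomputable def biprodOpIso (U V : C) :
    Opposite.op (U ⊞ V) ≅ (Opposite.op U ⊞ Opposite.op V) where
  hom := biprod.lift (biprod.inl : U ⟶ U ⊞ V).op (biprod.inr : V ⟶ U ⊞ V).op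
  inv := biprod.desc (biprod.fst : U ⊞ V ⟶ U).op (biprod.snd : U ⊞ V ⟶ V).op
  hom_inv_id := by
    rw [biprod.lift_desc, ← op_comp, ← op_comp, ← op_add, biprod.total, op_id]
  inv_hom_id := by
    apply biprod.hom_ext' <;> apply biprod.hom_ext <;>
      simp [← op_comp, ← op_id]

lemma opSum (hiso : ∀ {U V : C}, (U ≅ V) → U ∈ 𝒲 → V ∈ 𝒲)
    (hsum : ∀ U V : C, U ∈ 𝒲 → V ∈ 𝒲 → (U ⊞ V) ∈ 𝒲) :
    ∀ U V : Cᵒᵖ, U ∈ Opposite.op '' 𝒲 → V ∈ Opposite.op '' 𝒲 →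
      (U ⊞ V) ∈ Opposite.op '' 𝒲 := by
  rintro _ _ ⟨u, hu, rfl⟩ ⟨v, hv, rfl⟩
  refine ⟨(Opposite.op u ⊞ Opposite.op v).unop, ?_, rfl⟩
  exact hiso (biprodOpIso u v).unop.symm (hsum _ _ hu hv)

/-- Main lemma (coresolution side), obtained by duality. -/
lemma main_cores (hiso : ∀ {U V : C}, (U ≅ V) → U ∈ 𝒲 → V ∈ 𝒲)
    (hsum : ∀ U V : C, U ∈ 𝒲 → V ∈ 𝒲 → (U ⊞ V) ∈ 𝒲)
    (hres : ∀ G ∈ 𝒱, HasCores 𝒲 𝒲 G) {X : C} (hX : HasCores 𝒱 𝒲 X) :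
    HasCores 𝒲 𝒲 X := by
  rw [hasCores_iff_op] at hX ⊢
  refine main_res (𝒱 := Opposite.op '' 𝒱) (opSum hiso hsum) ?_ hX
  rintro G' ⟨G, hG, rfl⟩
  exact hasCores_iff_op.mp (hres G hG)

end Op

section Assembly

variable {𝒲 T E : Set C}

lemma memGW_iff {X : C} : MemGW 𝒲 X ↔ HasRes 𝒲 𝒲 X ∧ HasCores 𝒲 𝒲 X := by
  constructor
  · rintro ⟨⟨W, R, hc⟩, ⟨W', R', hc'⟩⟩
    constructor
    · exact ⟨{ W := W, K := R.K, g := R.g, f := R.f, mem := R.mem,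
               be := fun i => ⟨R.ses i, R.proper i, hc i⟩ }, R.hK⟩
    · exact ⟨{ W := W', K := R'.K, g := R'.g, f := R'.f, mem := R'.mem,
               be := fun i => ⟨R'.ses i, hc' i, R'.coproper i⟩ }, R'.hK⟩
  · rintro ⟨⟨R, hR⟩, ⟨R', hR'⟩⟩
    constructor
    · exact ⟨R.W, ⟨R.K, hR, R.g, R.f, R.mem, fun i => (R.be i).ses,
        fun i => (R.be i).cov⟩, fun i => (R.be i).contra⟩
    · exact ⟨R'.W, ⟨R'.K, hR', R'.g, R'.f, R'.mem, fun i => (R'.be i).ses,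
        fun i => (R'.be i).contra⟩, fun i => (R'.be i).cov⟩

lemma HasRes.weaken {E' : Set C} {A : C} (h : HasRes T E' A) (hsub : E ⊆ E') :
    HasRes T E A := by
  obtain ⟨R, rfl⟩ := h
  exact ⟨{ W := R.W, K := R.K, g := R.g, f := R.f, mem := R.mem,
           be := fun i => (R.be i).mono_cls hsub }, rfl⟩

lemma HasCores.weaken {E' : Set C} {A : C} (h : HasCores T E' A) (hsub : E ⊆ E') :
    HasCores T E A := by
  obtain ⟨R, rfl⟩ := h
  exact ⟨{ W := R.W, K := R.K, g := R.g, f := R.f, mem := R.mem,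
           be := fun i => (R.be i).mono_cls hsub }, rfl⟩

lemma W_sub_GW : 𝒲 ⊆ GW 𝒲 := by
  intro W hW
  refine memGW_iff.mpr ⟨?_, ?_⟩
  · exact (hasRes_zero hW 𝒲).cons (0 : (0 : C) ⟶ W) (𝟙 W) hW (be_zero_id 𝒲 W)
  · refine hasCores_iff_op.mpr ?_
    have h0 : HasRes (Opposite.op '' 𝒲) (Opposite.op '' 𝒲) (0 : Cᵒᵖ) := by
      apply hasRes_zero (W0 := Opposite.op W)
      exact ⟨W, hW, rfl⟩
    exact h0.cons (0 : (0 : Cᵒᵖ) ⟶ Opposite.op W) (𝟙 _) ⟨W, hW, rfl⟩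
      (be_zero_id _ _)

lemma GW_idem (hiso : ∀ {U V : C}, (U ≅ V) → U ∈ 𝒲 → V ∈ 𝒲)
    (hsum : ∀ {U V : C}, U ∈ 𝒲 → V ∈ 𝒲 → (U ⊞ V) ∈ 𝒲) :
    GW (GW 𝒲) = GW 𝒲 := by
  have hsub : 𝒲 ⊆ GW 𝒲 := W_sub_GW
  apply Set.Subset.antisymm
  · intro X hX
    obtain ⟨h1, h2⟩ := memGW_iff.mp hX
    refine memGW_iff.mpr ⟨?_, ?_⟩
    · exact main_res (𝒱 := GW 𝒲) (fun U V hU hV => hsum hU hV)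
        (fun G hG => (memGW_iff.mp hG).1) (h1.weaken hsub)
    · exact main_cores (𝒱 := GW 𝒲) hiso (fun U V hU hV => hsum hU hV)
        (fun G hG => (memGW_iff.mp hG).2) (h2.weaken hsub)
  · intro X hX
    obtain ⟨⟨RX, hRX⟩, -⟩ := memGW_iff.mp hX
    have hW0 : RX.W 0 ∈ GW 𝒲 := hsub (RX.mem 0)
    refine memGW_iff.mpr ⟨?_, ?_⟩
    · exact (hasRes_zero hW0 (GW 𝒲)).cons (0 : (0 : C) ⟶ X) (𝟙 X) hX
        (be_zero_id _ X)
    · refine hasCores_iff_op.mpr ?_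
      have h0 : HasRes (Opposite.op '' (GW 𝒲)) (Opposite.op '' (GW 𝒲)) (0 : Cᵒᵖ) := by
        apply hasRes_zero (W0 := Opposite.op (RX.W 0))
        exact ⟨RX.W 0, hW0, rfl⟩
      exact h0.cons (0 : (0 : Cᵒᵖ) ⟶ Opposite.op X) (𝟙 _) ⟨X, hX, rfl⟩
        (be_zero_id _ _)

end Assembly

end Stab13

/-- Stability of the Gorenstein category: `Gⁿ(𝒲) = G(𝒲)` for all `n ≥ 1`,
where `Gⁿ(𝒲)` is the `n`-fold iterate of the operation `G` applied to `𝒲`. -/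
theorem stmt_13 (𝒲 : Set C)
    (hiso : ∀ {U V : C}, (U ≅ V) → U ∈ 𝒲 → V ∈ 𝒲)
    (hsum : ∀ {U V : C}, U ∈ 𝒲 → V ∈ 𝒲 → (U ⊞ V) ∈ 𝒲) :
    ∀ n : ℕ, 1 ≤ n → (GW (C := C))^[n] 𝒲 = GW 𝒲 := by
  intro n hn
  induction n with
  | zero => omega
  | succ k ih =>
    rcases Nat.eq_zero_or_pos k with hk | hk
    · subst hk
      simp
    · rw [Function.iterate_succ_apply', ih hk, Stab13.GW_idem hiso hsum]
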